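/- If T₁, …, T_n are trees with at least one edge, none isomorphic to K₂, then pmd(T₁ □ ⋯ □ T_n □ K₂) = Δ(T₁) + ⋯ + Δ(T_n) + 1. -/

import Mathlib

open SimpleGraph

variable {V : Type*}

/-- A positive matching in a simple graph: a set `M` of pairwise disjoint edges of `G` together
with a vertex weighting `w` such that an edge `uv` of `G` satisfies `w u + w v > 0` iff the edge
belongs to `M`. -/
def IsPositiveMatching (G : SimpleGraph V) (M : Set (Sym2 V)) : Prop :=
  M ⊆ G.edgeSet ∧
  (∀ e ∈ M, ∀ f ∈ M, e ≠ f → ∀ v : V, v ∈ e → v ∉ f) ∧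
  ∃ w : V → ℝ, ∀ u v : V, G.Adj u v → (0 < w u + w v ↔ s(u, v) ∈ M)

/-- A positive matching decomposition of `G` with parts `E 0, …, E (p-1)`: an ordered partition
of the edge set of `G` such that each part is a positive matching of `G` minus the earlier
parts. -/
def IsPMD (G : SimpleGraph V) {p : ℕ} (E : Fin p → Set (Sym2 V)) : Prop :=
  (∀ i j : Fin p, i ≠ j → Disjoint (E i) (E j)) ∧
  (⋃ i, E i) = G.edgeSet ∧
  ∀ i : Fin p, IsPositiveMatching (G.deleteEdges (⋃ j : Fin p, ⋃ (_ : j < i), E j)) (E i)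

/-- The minimum number of parts in a positive matching decomposition of `G`. -/
noncomputable def pmd (G : SimpleGraph V) : ℕ :=
  sInf {p : ℕ | ∃ E : Fin p → Set (Sym2 V), IsPMD G E}

/-- Box (Cartesian) product of a family of graphs. -/
def boxProdPi {ι : Type*} {W : ι → Type*} (G : ∀ i, SimpleGraph (W i)) :
    SimpleGraph (∀ i, W i) where
  Adj a b := ∃ i, (G i).Adj (a i) (b i) ∧ ∀ j, j ≠ i → a j = b j
  symm := ⟨fun _ _ ⟨i, h, hj⟩ => ⟨i, h.symm, fun j hji => (hj j hji).symm⟩⟩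
  loopless := ⟨fun a ⟨i, h, _⟩ => (G i).irrefl h⟩


set_option linter.unusedSectionVars false
set_option maxHeartbeats 1000000

section TreeBasics
variable {W : Type*} [DecidableEq W] {G : SimpleGraph W} {r : W}

private lemma exists_path_len (hc : G.Connected) (v : W) :
    ∃ p : G.Walk r v, p.IsPath ∧ p.length = G.dist r v := by
  obtain ⟨p, hp⟩ := hc.exists_walk_length_eq_dist r v
  exact ⟨p, p.isPath_of_length_eq_dist hp, hp⟩

private lemma dist_le_of_mem_support {v x : W} (p : G.Walk r v) (hx : x ∈ p.support) :
    G.dist r x ≤ p.length :=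
  le_trans (G.dist_le _) (p.length_takeUntil_le hx)

/-- In a tree, adjacent vertices have different distances to the root. -/
private lemma tree_dist_ne (hT : G.IsTree) {u v : W} (h : G.Adj u v) :
    G.dist r u ≠ G.dist r v := by
  intro he
  obtain ⟨p, hp, hlen⟩ := exists_path_len (r := r) hT.isConnected u
  by_cases hv : v ∈ p.support
  · -- dist r v ≤ takeUntil length, with strict since v ≠ u
    have h1 : G.dist r v ≤ (p.takeUntil v hv).length := G.dist_le _
    have h2 := p.length_takeUntil_le hv
    have hne : v ≠ u := fun hvu => (hvu ▸ h).ne rfl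
    have h3 : (p.takeUntil v hv).length ≠ p.length := by
      intro hl
      have hspec := p.take_spec hv
      have : (p.dropUntil v hv).length = 0 := by
        have := congrArg SimpleGraph.Walk.length hspec
        rw [SimpleGraph.Walk.length_append] at this
        omega
      exact hne (SimpleGraph.Walk.eq_of_length_eq_zero this)
    omega
  · have hq : (p.concat h).IsPath := by
      rw [← SimpleGraph.Walk.isPath_reverse_iff, SimpleGraph.Walk.reverse_concat,
        SimpleGraph.Walk.cons_isPath_iff]
      refine ⟨hp.reverse, ?_⟩
      rwa [SimpleGraph.Walk.support_reverse, List.mem_reverse]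
    obtain ⟨q, hq', hqlen⟩ := exists_path_len (r := r) hT.isConnected v
    have := (hT.existsUnique_path r v).unique hq hq'
    have hlc := congrArg SimpleGraph.Walk.length this
    rw [SimpleGraph.Walk.length_concat, hqlen, hlen] at hlc
    omega

end TreeBasics


section TreeBasics
variable {W : Type*} [DecidableEq W] {G : SimpleGraph W} {r : W}

private lemma parent_exists (hT : G.IsTree) {v : W} (hv : v ≠ r) :
    ∃ u, G.Adj u v ∧ G.dist r u + 1 = G.dist r v := by
  obtain ⟨p, hp, hlen⟩ := exists_path_len (r := r) hT.isConnected v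
  have hd0 : G.dist r v ≠ 0 := by
    intro h
    exact hv ((hT.isConnected.dist_eq_zero_iff).mp h).symm
  cases hq : p.reverse with
  | nil => exact absurd rfl hv
  | @cons _ u _ ha q =>
    refine ⟨u, ha.symm, ?_⟩
    have h1 : G.dist r u ≤ q.reverse.length := G.dist_le _
    have h2 : q.length + 1 = p.length := by
      have := congrArg SimpleGraph.Walk.length hq
      rw [SimpleGraph.Walk.length_reverse, SimpleGraph.Walk.length_cons] at this
      omega
    rw [SimpleGraph.Walk.length_reverse] at h1
    obtain ⟨w, hw⟩ := hT.isConnected.exists_walk_length_eq_dist r u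
    have h3 : G.dist r v ≤ (w.concat ha.symm).length := G.dist_le _
    rw [SimpleGraph.Walk.length_concat, hw] at h3
    omega

private lemma parent_unique (hT : G.IsTree) {v u₁ u₂ : W}
    (h₁ : G.Adj u₁ v) (h₂ : G.Adj u₂ v)
    (hd₁ : G.dist r u₁ + 1 = G.dist r v) (hd₂ : G.dist r u₂ + 1 = G.dist r v) :
    u₁ = u₂ := by
  obtain ⟨p₁, hp₁, hl₁⟩ := exists_path_len (r := r) hT.isConnected u₁
  obtain ⟨p₂, hp₂, hl₂⟩ := exists_path_len (r := r) hT.isConnected u₂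
  have hv₁ : v ∉ p₁.support := by
    intro hmem
    have : G.dist r v ≤ (p₁.takeUntil v hmem).length := G.dist_le _
    have := le_trans this (p₁.length_takeUntil_le hmem)
    omega
  have hv₂ : v ∉ p₂.support := by
    intro hmem
    have : G.dist r v ≤ (p₂.takeUntil v hmem).length := G.dist_le _
    have := le_trans this (p₂.length_takeUntil_le hmem)
    omega
  have hq₁ : (p₁.concat h₁).IsPath := by
    rw [← SimpleGraph.Walk.isPath_reverse_iff, SimpleGraph.Walk.reverse_concat,
      SimpleGraph.Walk.cons_isPath_iff]
    exact ⟨hp₁.reverse, by rwa [SimpleGraph.Walk.support_reverse, List.mem_reverse]⟩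
  have hq₂ : (p₂.concat h₂).IsPath := by
    rw [← SimpleGraph.Walk.isPath_reverse_iff, SimpleGraph.Walk.reverse_concat,
      SimpleGraph.Walk.cons_isPath_iff]
    exact ⟨hp₂.reverse, by rwa [SimpleGraph.Walk.support_reverse, List.mem_reverse]⟩
  have heq := (hT.existsUnique_path r v).unique hq₁ hq₂
  have := congrArg (fun w => SimpleGraph.Walk.support w.reverse) heq
  simp only [SimpleGraph.Walk.reverse_concat, SimpleGraph.Walk.support_cons] at this
  have h₁' := p₁.reverse.support_eq_cons
  have h₂' := p₂.reverse.support_eq_cons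
  rw [h₁', h₂'] at this
  exact (List.cons.injEq _ _ _ _ ▸ this).2 |> fun h => (List.cons.injEq _ _ _ _ ▸ h).1

end TreeBasics


instance (priority := low) zmodNonempty {D : ℕ} : Nonempty (ZMod D) := ⟨0⟩

section TreeRec
variable {W : Type*} [DecidableEq W] {D : ℕ}

/-- Color for the `k`-th child, avoiding color `γ`. -/
def avoidc (γ : ZMod D) (k : ℕ) : ZMod D := γ + 1 + (k : ZMod D)

lemma avoidc_ne (hD : 2 ≤ D) {γ : ZMod D} {k : ℕ} (hk : k < D - 1) : avoidc γ k ≠ γ := by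
  intro h
  have h1 : ((1 + k : ℕ) : ZMod D) = 0 := by
    push_cast
    rw [avoidc] at h
    linear_combination h
  rw [ZMod.natCast_eq_zero_iff] at h1
  have := Nat.le_of_dvd (by omega) h1
  omega

lemma avoidc_injOn (hD : 2 ≤ D) {γ : ZMod D} {k k' : ℕ} (hk : k < D - 1) (hk' : k' < D - 1)
    (h : avoidc γ k = avoidc γ k') : k = k' := by
  have : (k : ZMod D) = (k' : ZMod D) := by
    rw [avoidc, avoidc] at h
    exact add_left_cancel h
  have := congrArg ZMod.val this
  rwa [ZMod.val_natCast_of_lt (by omega), ZMod.val_natCast_of_lt (by omega)] at this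

/-- Up-color of each vertex: a proper edge coloring of a rooted tree via the parent map. -/
noncomputable def upcolF (r : W) (dep : W → ℕ) (par : W → W)
    (hpar : ∀ v, v ≠ r → dep (par v) < dep v)
    (pk : W → W → ℕ) (v : W) : ZMod D :=
  if hv : v = r then 0
  else if par v = r then ((pk (par v) v : ℕ) : ZMod D)
  else avoidc (upcolF r dep par hpar pk (par v)) (pk (par v) v)
termination_by dep v
decreasing_by exact hpar v hv

lemma upcolF_ne {r dep par hpar pk} {v : W} (hv : v ≠ r) :
    upcolF (D := D) r dep par hpar pk v =
      if par v = r then ((pk (par v) v : ℕ) : ZMod D)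
      else avoidc (upcolF r dep par hpar pk (par v)) (pk (par v) v) := by
  rw [upcolF, dif_neg hv]

/-- One step of the weight recursion. -/
noncomputable def fstep [NeZero D] (g : ZMod D → ℝ) (t : ZMod D) : ZMod D → ℝ :=
  fun s => if s = t then -(g s) + 1
    else -(Finset.univ.sup' Finset.univ_nonempty fun s' => |g s'|) - 2

lemma le_fsup [NeZero D] (g : ZMod D → ℝ) (s : ZMod D) :
    |g s| ≤ Finset.univ.sup' Finset.univ_nonempty fun s' => |g s'| :=
  Finset.le_sup' (fun s' => |g s'|) (Finset.mem_univ s)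

lemma fsup_nonneg [NeZero D] (g : ZMod D → ℝ) :
    (0:ℝ) ≤ Finset.univ.sup' Finset.univ_nonempty fun s' => |g s'| :=
  le_trans (abs_nonneg (g 0)) (le_fsup g 0)

lemma fstep_sum_pos [NeZero D] (g : ZMod D → ℝ) (t : ZMod D) :
    fstep g t t + g t = 1 := by simp [fstep]

lemma fstep_sum_nonpos [NeZero D] (g : ZMod D → ℝ) {t s : ZMod D} (h : s ≠ t) :
    fstep g t s + g s ≤ -1 := by
  have h1 := le_fsup g s
  have h2 := le_abs_self (g s)
  simp only [fstep, if_neg h]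
  linarith

lemma fstep_pair [NeZero D] (hone : (1 : ZMod D) ≠ 0) (g : ZMod D → ℝ) (t s : ZMod D) :
    fstep g t s + fstep g t (s + 1) ≤ 0 := by
  have hBn := fsup_nonneg g
  have hne : s ≠ s + 1 := by
    intro h
    exact hone (by linear_combination -h)
  by_cases h1 : s = t
  · have h2 : s + 1 ≠ t := fun h => hne (h1.trans h.symm)
    have hb := le_fsup g s
    have hb2 := neg_le_abs (g s)
    simp only [fstep, if_pos h1, if_neg h2]
    linarith
  · by_cases h2 : s + 1 = t
    · have hb := le_fsup g (s+1)
      have hb2 := neg_le_abs (g (s+1))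
      simp only [fstep, if_neg h1, if_pos h2]
      linarith
    · simp only [fstep, if_neg h1, if_neg h2]
      linarith

/-- The weight function on a rooted tree. -/
noncomputable def fW [NeZero D] (r : W) (dep : W → ℕ) (par : W → W)
    (hpar : ∀ v, v ≠ r → dep (par v) < dep v)
    (sc : W → ZMod D) (v : W) : ZMod D → ℝ :=
  if hv : v = r then fun _ => -1
  else fstep (fW r dep par hpar sc (par v)) (sc v)
termination_by dep v
decreasing_by exact hpar v hv

lemma fW_root [NeZero D] {r : W} {dep par hpar} {sc : W → ZMod D} :
    fW r dep par hpar sc r = fun _ => -1 := by rw [fW, dif_pos rfl]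

lemma fW_ne [NeZero D] {r : W} {dep par hpar} {sc : W → ZMod D} {v : W} (hv : v ≠ r) :
    fW r dep par hpar sc v = fstep (fW r dep par hpar sc (par v)) (sc v) := by
  rw [fW, dif_neg hv]

lemma fW_pair [NeZero D] (hone : (1 : ZMod D) ≠ 0) {r : W} {dep par hpar} {sc : W → ZMod D}
    (v : W) (s : ZMod D) :
    fW r dep par hpar sc v s + fW r dep par hpar sc v (s + 1) ≤ 0 := by
  by_cases hv : v = r
  · subst hv; rw [fW_root]; norm_num
  · rw [fW_ne hv]; exact fstep_pair hone _ _ _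

end TreeRec


section TreeData
variable {W : Type*} [Fintype W] [DecidableEq W]

theorem tree_data {G : SimpleGraph W} [DecidableRel G.Adj]
    (hT : G.IsTree) {D : ℕ} (hD2 : 2 ≤ D) (hdeg : ∀ v, G.degree v ≤ D) (r : W) :
    ∃ (dep : W → ℕ) (ecol : W → W → ZMod D) (f : ZMod D → W → ZMod D → ℝ),
      (∀ u v, G.Adj u v → dep u + 1 = dep v ∨ dep v + 1 = dep u) ∧
      (∀ u v, G.Adj u v → ecol u v = ecol v u) ∧
      (∀ u v v', G.Adj u v → G.Adj u v' → ecol u v = ecol u v' → v = v') ∧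
      (∀ c u v s, G.Adj u v → (0 < f c u s + f c v s ↔ ecol u v + s = c)) ∧
      (∀ c a s, f c a s + f c a (s+1) ≤ 0) := by
  haveI : NeZero D := ⟨by omega⟩
  have hone : (1 : ZMod D) ≠ 0 := by
    intro h
    rw [show (1 : ZMod D) = ((1:ℕ) : ZMod D) by push_cast; ring,
      ZMod.natCast_eq_zero_iff] at h
    have := Nat.le_of_dvd one_pos h
    omega
  set dep : W → ℕ := fun v => G.dist r v with hdep
  -- parent function
  have hex : ∀ v, ∃ u, v ≠ r → (G.Adj u v ∧ dep u + 1 = dep v) := by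
    intro v
    by_cases h : v = r
    · exact ⟨r, fun h' => absurd h h'⟩
    · obtain ⟨u, hu⟩ := parent_exists hT h
      exact ⟨u, fun _ => hu⟩
  choose par hpar using hex
  have hlt : ∀ v, v ≠ r → dep (par v) < dep v := fun v h => by
    have := (hpar v h).2; omega
  have hdr : dep r = 0 := by simp [hdep, SimpleGraph.dist_self]
  -- every edge is a parent-child edge
  have hP2 : ∀ u v, G.Adj u v → (v ≠ r ∧ par v = u) ∨ (u ≠ r ∧ par u = v) := by
    intro u v h
    have h1 : dep v ≤ dep u + 1 := by
      obtain ⟨w, hw⟩ := hT.isConnected.exists_walk_length_eq_dist r u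
      have := G.dist_le (w.concat h)
      rw [SimpleGraph.Walk.length_concat, hw] at this
      exact this
    have h2 : dep u ≤ dep v + 1 := by
      obtain ⟨w, hw⟩ := hT.isConnected.exists_walk_length_eq_dist r v
      have := G.dist_le (w.concat h.symm)
      rw [SimpleGraph.Walk.length_concat, hw] at this
      exact this
    have h3 : dep u ≠ dep v := tree_dist_ne hT h
    by_cases hc : dep u + 1 = dep v
    · have hv : v ≠ r := by intro hvr; rw [hvr, hdr] at hc; omega
      exact Or.inl ⟨hv, parent_unique hT (hpar v hv).1 h (hpar v hv).2 hc⟩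
    · have hc' : dep v + 1 = dep u := by omega
      have hu : u ≠ r := by intro hur; rw [hur, hdr] at hc'; omega
      exact Or.inr ⟨hu, parent_unique hT (hpar u hu).1 h.symm (hpar u hu).2 hc'⟩
  -- children sets and injective labels
  set childS : W → Finset W := fun p => Finset.univ.filter fun x => x ≠ r ∧ par x = p
    with hchildS
  have hchild_mem : ∀ {u v : W}, v ≠ r → par v = u → v ∈ childS u := by
    intro u v h1 h2
    simp [hchildS, h1, h2]
  have hcard : ∀ p, (childS p).card ≤ if p = r then D else D - 1 := by
    intro p
    have hsub : childS p ⊆ G.neighborFinset p := by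
      intro x hx
      simp only [hchildS, Finset.mem_filter] at hx
      rw [SimpleGraph.mem_neighborFinset]
      have := (hpar x hx.2.1).1
      rwa [hx.2.2] at this
    by_cases hp : p = r
    · rw [if_pos hp]
      exact le_trans (Finset.card_le_card hsub) (hdeg p)
    · rw [if_neg hp]
      have hsub2 : childS p ⊆ (G.neighborFinset p).erase (par p) := by
        intro x hx
        rw [Finset.mem_erase]
        refine ⟨?_, hsub hx⟩
        simp only [hchildS, Finset.mem_filter] at hx
        intro hxp
        have h1 := (hpar x hx.2.1).2
        have h2 := (hpar p hp).2
        rw [hx.2.2] at h1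
        rw [← hxp] at h2
        omega
      have hmem : par p ∈ G.neighborFinset p := by
        rw [SimpleGraph.mem_neighborFinset]
        exact (hpar p hp).1.symm
      calc (childS p).card ≤ ((G.neighborFinset p).erase (par p)).card :=
            Finset.card_le_card hsub2
        _ = G.degree p - 1 := by rw [Finset.card_erase_of_mem hmem]; rfl
        _ ≤ D - 1 := by have := hdeg p; omega
  have hpk : ∀ p, ∃ g : W → ℕ, (∀ x ∈ childS p, ∀ y ∈ childS p, g x = g y → x = y) ∧
      ∀ x ∈ childS p, g x < if p = r then D else D - 1 := by
    intro p
    obtain ⟨e⟩ : Nonempty ((childS p : Finset W) ↪ Fin (if p = r then D else D - 1)) := by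
      apply Function.Embedding.nonempty_of_card_le
      rw [Fintype.card_coe, Fintype.card_fin]
      exact hcard p
    refine ⟨fun x => if h : x ∈ childS p then (e ⟨x, h⟩).val else 0, ?_, ?_⟩
    · intro x hx y hy hxy
      simp only [dif_pos hx, dif_pos hy] at hxy
      have := e.injective (Fin.val_injective hxy)
      exact congrArg Subtype.val this
    · intro x hx
      simp only [dif_pos hx]
      exact (e ⟨x, hx⟩).isLt
  choose pk hpkinj hpklt using hpk
  set upc : W → ZMod D := upcolF r dep par hlt pk with hupc
  -- up-colors of siblings are distinct
  have hsib : ∀ u v v', v ≠ r → par v = u → v' ≠ r → par v' = u → upc v = upc v' → v = v' := by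
    intro u v v' hv hpv hv' hpv' he
    have hm := hchild_mem hv hpv
    have hm' := hchild_mem hv' hpv'
    rw [hupc, upcolF_ne hv, upcolF_ne hv', hpv, hpv'] at he
    by_cases hu : u = r
    · rw [if_pos hu, if_pos hu] at he
      have hlt1 := hpklt u v hm
      have hlt2 := hpklt u v' hm'
      rw [if_pos hu] at hlt1 hlt2
      have : pk u v = pk u v' := by
        have := congrArg ZMod.val he
        rwa [ZMod.val_natCast_of_lt hlt1, ZMod.val_natCast_of_lt hlt2] at this
      exact hpkinj u v hm v' hm' this
    · rw [if_neg hu, if_neg hu] at he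
      have hlt1 := hpklt u v hm
      have hlt2 := hpklt u v' hm'
      rw [if_neg hu] at hlt1 hlt2
      exact hpkinj u v hm v' hm' (avoidc_injOn hD2 hlt1 hlt2 he)
  -- child's up-color differs from parent's
  have hucne : ∀ v, v ≠ r → par v ≠ r → upc v ≠ upc (par v) := by
    intro v hv hp
    rw [hupc, upcolF_ne hv, if_neg hp]
    have := hpklt (par v) v (hchild_mem hv rfl)
    rw [if_neg hp] at this
    exact avoidc_ne hD2 this
  set ecol : W → W → ZMod D := fun u v => if dep v = dep u + 1 then upc v else upc u
    with hecol
  have hecol_child : ∀ u v, v ≠ r → par v = u → ecol u v = upc v ∧ ecol v u = upc v := by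
    intro u v hv hpv
    have hd := (hpar v hv).2
    rw [hpv] at hd
    constructor
    · rw [hecol]; simp only []; rw [if_pos hd.symm]
    · rw [hecol]; simp only []; rw [if_neg (by omega)]
  refine ⟨dep, ecol, fun c => fW r dep par hlt (fun v => c - upc v), ?_, ?_, ?_, ?_, ?_⟩
  · -- h1
    intro u v h
    rcases hP2 u v h with ⟨hv, hpv⟩ | ⟨hu, hpu⟩
    · left; have := (hpar v hv).2; rw [hpv] at this; exact this
    · right; have := (hpar u hu).2; rw [hpu] at this; exact this
  · -- h2
    intro u v h
    rcases hP2 u v h with ⟨hv, hpv⟩ | ⟨hu, hpu⟩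
    · rw [(hecol_child u v hv hpv).1, (hecol_child u v hv hpv).2]
    · rw [(hecol_child v u hu hpu).1, (hecol_child v u hu hpu).2]
  · -- h3 properness
    intro u v v' h h' he
    rcases hP2 u v h with ⟨hv, hpv⟩ | ⟨hu, hpu⟩ <;>
      rcases hP2 u v' h' with ⟨hv', hpv'⟩ | ⟨hu', hpu'⟩
    · rw [(hecol_child u v hv hpv).1, (hecol_child u v' hv' hpv').1] at he
      exact hsib u v v' hv hpv hv' hpv' he
    · -- v child of u, u child of v'
      rw [(hecol_child u v hv hpv).1, (hecol_child v' u hu' hpu').2] at he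
      exfalso
      have : par v ≠ r := by rw [hpv]; exact hu'
      exact hucne v hv this (by rw [hpv]; exact he)
    · rw [(hecol_child v u hu hpu).2, (hecol_child u v' hv' hpv').1] at he
      exfalso
      have : par v' ≠ r := by rw [hpv']; exact hu
      exact hucne v' hv' this (by rw [hpv']; exact he.symm)
    · rw [← hpu, ← hpu']
  · -- h4
    intro c u v s h
    have key : ∀ (vv : W), vv ≠ r → ∀ s : ZMod D,
        (0 < fW r dep par hlt (fun x => c - upc x) (par vv) s +
          fW r dep par hlt (fun x => c - upc x) vv s ↔ upc vv + s = c) := by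
      intro vv hvv s'
      rw [fW_ne hvv]
      set g := fW r dep par hlt (fun x => c - upc x) (par vv) with hg
      by_cases hs : s' = c - upc vv
      · have h1 := fstep_sum_pos g (c - upc vv)
        refine iff_of_true ?_ ?_
        · rw [hs]; linarith
        · rw [hs]; ring
      · have h2 := fstep_sum_nonpos g hs
        refine iff_of_false ?_ ?_
        · intro hpos; linarith
        · intro hc; exact hs (by linear_combination hc)
    rcases hP2 u v h with ⟨hv, hpv⟩ | ⟨hu, hpu⟩
    · rw [(hecol_child u v hv hpv).1]
      have := key v hv s
      rwa [hpv] at this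
    · rw [(hecol_child v u hu hpu).2]
      have := key u hu s
      rw [hpu, add_comm (fW r dep par hlt (fun x => c - upc x) v s)] at this
      exact this
  · -- h5
    intro c a s
    exact fW_pair hone a s

end TreeData


/-- If trees... -/
theorem pmd_boxProd_trees_K2 {n : ℕ} {W : Fin n → Type*} [∀ i, Fintype (W i)]
    [∀ i, DecidableEq (W i)] (T : ∀ i, SimpleGraph (W i)) [∀ i, DecidableRel (T i).Adj]
    (htree : ∀ i, (T i).IsTree) (hedge : ∀ i, (T i).edgeSet.Nonempty)
    (hK2 : ∀ i, ¬ Nonempty ((T i) ≃g (⊤ : SimpleGraph (Fin 2)))) :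
    pmd ((boxProdPi T) □ (⊤ : SimpleGraph (Fin 2))) = (∑ i, (T i).maxDegree) + 1 := by
  classical
  set X := ((∀ i, W i) × Fin 2)
  set H : SimpleGraph X := (boxProdPi T) □ (⊤ : SimpleGraph (Fin 2)) with hH
  have hW : ∀ i, Nonempty (W i) := fun i => ⟨(Quot.out (hedge i).choose).1⟩
  set D : Fin n → ℕ := fun i => (T i).maxDegree with hD
  have hadjpair : ∀ i, ∃ u v : W i, (T i).Adj u v := by
    intro i
    obtain ⟨e, he⟩ := hedge i
    induction e with
    | _ u v => exact ⟨u, v, he⟩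
  have hD2 : ∀ i, 2 ≤ D i := by
    intro i
    by_contra hlt
    push_neg at hlt
    obtain ⟨u, v, huv⟩ := hadjpair i
    apply hK2 i
    have hdu : (T i).degree u = 1 := by
      have h1 : 0 < (T i).degree u := (T i).degree_pos_iff_exists_adj u |>.mpr ⟨v, huv⟩
      have h2 := (T i).degree_le_maxDegree u
      have h3 : (T i).maxDegree < 2 := hlt
      omega
    have hdv : (T i).degree v = 1 := by
      have h1 : 0 < (T i).degree v := (T i).degree_pos_iff_exists_adj v |>.mpr ⟨u, huv.symm⟩
      have h2 := (T i).degree_le_maxDegree v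
      have h3 : (T i).maxDegree < 2 := hlt
      omega
    have hnb : ∀ a b : W i, (T i).degree a = 1 → (T i).Adj a b → (T i).Adj a b →
        ∀ b', (T i).Adj a b' → b' = b := by
      intro a b hd hab _ b' hab'
      obtain ⟨c, hc⟩ := Finset.card_eq_one.mp hd
      have h1 : b ∈ (T i).neighborFinset a := (T i).mem_neighborFinset a b |>.mpr hab
      have h2 : b' ∈ (T i).neighborFinset a := (T i).mem_neighborFinset a b' |>.mpr hab'
      rw [hc, Finset.mem_singleton] at h1 h2
      rw [h2, h1]
    have hclass : ∀ w : W i, w = u ∨ w = v := by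
      have key : ∀ (a b : W i) (p : (T i).Walk a b), a = u ∨ a = v → b = u ∨ b = v := by
        intro a b p
        induction p with
        | nil => exact id
        | cons h p ih =>
          rename_i a' c' b' 
          intro ha
          apply ih
          rcases ha with rfl | rfl
          · right; exact hnb _ _ hdu huv huv _ h
          · left; exact hnb _ _ hdv huv.symm huv.symm _ h
      intro w
      exact key u w ((htree i).isConnected u w).some (Or.inl rfl)
    have huvne : u ≠ v := huv.ne
    refine ⟨⟨⟨fun w => if w = u then 0 else 1, fun k => if k = 0 then u else v, ?_, ?_⟩, ?_⟩⟩
    · intro w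
      rcases hclass w with rfl | rfl
      · simp
      · simp [huvne.symm]
    · intro k
      fin_cases k
      · simp
      · simp [huvne.symm]
    · intro a b
      show (if a = u then (0:Fin 2) else 1) ≠ (if b = u then (0:Fin 2) else 1) ↔ (T i).Adj a b
      rcases hclass a with rfl | rfl <;> rcases hclass b with rfl | rfl
      · simp [(T i).irrefl]
      · simp [if_neg huvne.symm, huv]
      · simp [if_neg huvne.symm, huv.symm]
      · simp [if_neg huvne.symm, (T i).irrefl]
  haveI hDNZ : ∀ i, NeZero (D i) := fun i => ⟨by have := hD2 i; omega⟩
  have hdata := fun i => tree_data (htree i) (hD2 i)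
    (fun v => (T i).degree_le_maxDegree v) (hW i).some
  choose dep ecol f h1 h2 h3 h4 h5 using hdata
  set S := ∑ i, D i with hS
  have hcardK : Fintype.card ((i : Fin n) × ZMod (D i)) = S := by
    rw [Fintype.card_sigma]
    exact Finset.sum_congr rfl fun i _ => ZMod.card (D i)
  set eK := Fintype.equivFinOfCardEq hcardK with heK
  set shift : ∀ i : Fin n, (∀ j, W j) → Fin 2 → ZMod (D i) :=
    fun i x ε => (((ε.val + ∑ j ∈ Finset.univ.erase i, dep j (x j) : ℕ) : ZMod (D i))) with hshift
  set E : Fin (S+1) → Set (Sym2 X) := fun k =>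
    if k = Fin.last S then {e | ∃ x : ∀ j, W j, e = s(((x, 0) : X), ((x, 1) : X))}
    else {e | ∃ (i : Fin n) (b : W i) (x : ∀ j, W j) (ε : Fin 2),
      (T i).Adj (x i) b ∧ (eK ⟨i, ecol i (x i) b + shift i x ε⟩).castSucc = k ∧
      e = s(((x, ε) : X), ((Function.update x i b, ε) : X))} with hE
  have hadj : ∀ (x y : ∀ j, W j) (ε δ : Fin 2),
      H.Adj (x, ε) (y, δ) ↔
        ((∃ i, (T i).Adj (x i) (y i) ∧ ∀ j, j ≠ i → x j = y j) ∧ ε = δ) ∨ (ε ≠ δ ∧ x = y) := by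
    intro x y ε δ
    rw [hH, SimpleGraph.boxProd_adj]
    constructor
    · rintro (⟨h, h2⟩ | ⟨h, h2⟩)
      · exact Or.inl ⟨h, h2⟩
      · exact Or.inr ⟨by simpa using h, h2⟩
    · rintro (⟨h, h2⟩ | ⟨h, h2⟩)
      · exact Or.inl ⟨h, h2⟩
      · exact Or.inr ⟨by simpa using h, h2⟩
  have hshift_split : ∀ (i : Fin n) (x : ∀ j, W j) (ε : Fin 2), shift i x ε =
      ((ε.val : ℕ) : ZMod (D i)) +
        ((∑ j ∈ Finset.univ.erase i, dep j (x j) : ℕ) : ZMod (D i)) := by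
    intro i x ε
    rw [hshift]
    push_cast
    ring
  have hshift_eq : ∀ (i : Fin n) (x : ∀ j, W j) (b : W i) (ε : Fin 2),
      shift i (Function.update x i b) ε = shift i x ε := by
    intro i x b ε
    have hsc : ∑ j ∈ Finset.univ.erase i, dep j (Function.update x i b j) =
        ∑ j ∈ Finset.univ.erase i, dep j (x j) :=
      Finset.sum_congr rfl fun j hj => by
        rw [Function.update_of_ne (Finset.ne_of_mem_erase hj)]
    rw [hshift_split, hshift_split, hsc]
  have hshift_vert : ∀ (i : Fin n) (x : ∀ j, W j),
      shift i x 1 = shift i x 0 + 1 := by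
    intro i x
    rw [hshift_split, hshift_split]
    show ((1:ℕ) : ZMod (D i)) + _ = ((0:ℕ) : ZMod (D i)) + _ + 1
    push_cast
    ring
  have hshift_adj : ∀ (i j : Fin n) (x : ∀ j, W j) (b : W j) (ε : Fin 2), j ≠ i →
      (T j).Adj (x j) b →
      shift i (Function.update x j b) ε = shift i x ε + 1 ∨
        shift i x ε = shift i (Function.update x j b) ε + 1 := by
    intro i j x b ε hji hb
    have hmem : j ∈ Finset.univ.erase i := Finset.mem_erase.mpr ⟨hji, Finset.mem_univ j⟩
    have hsum : ∀ y : ∀ j, W j, ∑ t ∈ Finset.univ.erase i, dep t (y t) =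
        dep j (y j) + ∑ t ∈ (Finset.univ.erase i).erase j, dep t (y t) :=
      fun y => (Finset.add_sum_erase _ _ hmem).symm
    have htail : ∑ t ∈ (Finset.univ.erase i).erase j, dep t (Function.update x j b t) =
        ∑ t ∈ (Finset.univ.erase i).erase j, dep t (x t) := by
      refine Finset.sum_congr rfl fun t ht => ?_
      rw [Function.update_of_ne (Finset.ne_of_mem_erase ht)]
    have hdj : dep j (x j) + 1 = dep j b ∨ dep j b + 1 = dep j (x j) := h1 j (x j) b hb
    rcases hdj with hdj | hdj
    · left
      rw [hshift_split, hshift_split, hsum (Function.update x j b), hsum x, htail,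
        Function.update_self, ← hdj]
      push_cast
      ring
    · right
      rw [hshift_split, hshift_split, hsum (Function.update x j b), hsum x, htail,
        Function.update_self, ← hdj]
      push_cast
      ring
  have hvadj : ∀ x : ∀ j, W j, H.Adj (x, 0) (x, 1) := fun x =>
    (hadj x x 0 1).mpr (Or.inr ⟨by decide, rfl⟩)
  have hhadj : ∀ (i : Fin n) (b : W i) (x : ∀ j, W j) (ε : Fin 2), (T i).Adj (x i) b →
      H.Adj (x, ε) (Function.update x i b, ε) := by
    intro i b x ε hb
    refine (hadj _ _ _ _).mpr (Or.inl ⟨⟨i, ?_, ?_⟩, rfl⟩)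
    · rwa [Function.update_self]
    · intro j hj
      rw [Function.update_of_ne hj]
  have hvmem : ∀ x : ∀ j, W j, s(((x,0):X), ((x,1):X)) ∈ E (Fin.last S) := by
    intro x
    rw [hE]
    simp only [if_pos rfl, Set.mem_setOf_eq]
    exact ⟨x, rfl⟩
  have hkne : ∀ (i : Fin n) (c : ZMod (D i)), (eK ⟨i, c⟩).castSucc ≠ Fin.last S :=
    fun i c => Fin.ne_of_lt (Fin.castSucc_lt_last _)
  have hhmem : ∀ (i : Fin n) (b : W i) (x : ∀ j, W j) (ε : Fin 2), (T i).Adj (x i) b →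
      s(((x,ε):X), ((Function.update x i b, ε):X)) ∈
        E ((eK ⟨i, ecol i (x i) b + shift i x ε⟩).castSucc) := by
    intro i b x ε hb
    rw [hE]
    simp only [if_neg (hkne _ _), Set.mem_setOf_eq]
    exact ⟨i, b, x, ε, hb, rfl, rfl⟩
  have hvh : ∀ (x y : ∀ j, W j) (i : Fin n) (b : W i) (ε : Fin 2),
      s(((x,(0:Fin 2)):X), ((x,1):X)) ≠ s(((y,ε):X), ((Function.update y i b, ε):X)) := by
    intro x y i b ε h
    rw [Sym2.eq_iff] at h
    simp only [Prod.mk.injEq] at h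
    rcases h with ⟨⟨-, hx1⟩, ⟨-, hx2⟩⟩ | ⟨⟨-, hx1⟩, ⟨-, hx2⟩⟩ <;>
      exact absurd (hx1.trans hx2.symm) (by decide)
  have hanchor : ∀ (i : Fin n) (c : ZMod (D i)) (e : Sym2 X) (z : ∀ j, W j) (ε : Fin 2),
      e ∈ E ((eK ⟨i, c⟩).castSucc) → ((z, ε) : X) ∈ e →
      ∃ b, (T i).Adj (z i) b ∧ ecol i (z i) b + shift i z ε = c ∧
        e = s(((z, ε) : X), ((Function.update z i b, ε) : X)) := by
    intro i c e z ε hmem hz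
    rw [hE] at hmem
    simp only [if_neg (hkne i c), Set.mem_setOf_eq] at hmem
    obtain ⟨i', b, x, ε', hb, hk, rfl⟩ := hmem
    have hsig : (⟨i', ecol i' (x i') b + shift i' x ε'⟩ : (j : Fin n) × ZMod (D j)) = ⟨i, c⟩ :=
      eK.injective (Fin.castSucc_injective _ hk)
    injection hsig with hii hsig2
    subst hii
    have hcc : ecol i' (x i') b + shift i' x ε' = c := eq_of_heq hsig2
    rw [Sym2.mem_iff] at hz
    rcases hz with hz | hz
    · rw [Prod.mk.injEq] at hz
      obtain ⟨hz1, hz2⟩ := hz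
      subst hz1
      subst hz2
      exact ⟨b, hb, hcc, rfl⟩
    · rw [Prod.mk.injEq] at hz
      obtain ⟨hz1, hz2⟩ := hz
      refine ⟨x i', ?_, ?_, ?_⟩
      · rw [hz1, Function.update_self]
        exact hb.symm
      · rw [hz1, Function.update_self, h2 i' b (x i') hb.symm, hshift_eq i' x b, hz2]
        exact hcc
      · rw [hz1, Function.update_idem, Function.update_eq_self, hz2]
        exact Sym2.eq_swap
  have hupd_ne : ∀ (i : Fin n) (x : ∀ j, W j) (b : W i), (T i).Adj (x i) b →
      Function.update x i b ≠ x := by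
    intro i x b hb h
    have := congrFun h i
    rw [Function.update_self] at this
    exact hb.ne' this
  have hdisj : ∀ (k k' : Fin (S+1)) (e : Sym2 X), e ∈ E k → e ∈ E k' → k = k' := by
    intro k k' e hk hk'
    by_cases hl : k = Fin.last S <;> by_cases hl' : k' = Fin.last S
    · rw [hl, hl']
    · exfalso
      rw [hE] at hk hk'
      simp only [if_pos hl, Set.mem_setOf_eq] at hk
      simp only [if_neg hl', Set.mem_setOf_eq] at hk'
      obtain ⟨x, rfl⟩ := hk
      obtain ⟨i, b, y, ε, hb, -, he⟩ := hk'
      exact hvh x y i b ε he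
    · exfalso
      rw [hE] at hk hk'
      simp only [if_pos hl', Set.mem_setOf_eq] at hk'
      simp only [if_neg hl, Set.mem_setOf_eq] at hk
      obtain ⟨x, rfl⟩ := hk'
      obtain ⟨i, b, y, ε, hb, -, he⟩ := hk
      exact hvh x y i b ε he
    · rw [hE] at hk
      simp only [if_neg hl, Set.mem_setOf_eq] at hk
      obtain ⟨i, b, x, ε, hb, hkk, rfl⟩ := hk
      obtain ⟨i', c', hk'eq⟩ : ∃ i' c', (eK ⟨i', c'⟩).castSucc = k' := by
        refine ⟨(eK.symm (k'.castPred hl')).1, (eK.symm (k'.castPred hl')).2, ?_⟩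
        rw [Sigma.eta, Equiv.apply_symm_apply, Fin.castSucc_castPred]
      obtain ⟨b₂, hb₂, hc₂, he₂⟩ :=
        hanchor i' c' _ x ε (hk'eq ▸ hk') (Sym2.mem_mk_left _ _)
      rw [Sym2.eq_iff] at he₂
      rcases he₂ with ⟨-, he₂⟩ | ⟨he₂, he₃⟩
      · rw [Prod.mk.injEq] at he₂
        obtain ⟨he₂, -⟩ := he₂
        by_cases hii : i = i'
        · subst hii
          have hbb : b = b₂ := by
            have := congrFun he₂ i
            rwa [Function.update_self, Function.update_self] at this
          rw [← hk'eq, ← hkk, ← hc₂, hbb]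
        · exfalso
          have := congrFun he₂ i
          rw [Function.update_self, Function.update_of_ne hii] at this
          exact hb.ne this.symm
      · exfalso
        rw [Prod.mk.injEq] at he₃
        exact hupd_ne i x b hb he₃.1
  have hEsub : ∀ k, E k ⊆ H.edgeSet := by
    intro k e he
    rw [hE] at he
    by_cases hl : k = Fin.last S
    · simp only [if_pos hl, Set.mem_setOf_eq] at he
      obtain ⟨x, rfl⟩ := he
      exact (H.mem_edgeSet).mpr (hvadj x)
    · simp only [if_neg hl, Set.mem_setOf_eq] at he
      obtain ⟨i, b, x, ε, hb, -, rfl⟩ := he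
      exact (H.mem_edgeSet).mpr (hhadj i b x ε hb)
  have hupdy : ∀ (i : Fin n) (x y : ∀ j, W j), (∀ j, j ≠ i → x j = y j) →
      y = Function.update x i (y i) := by
    intro i x y hml
    funext j
    by_cases hj : j = i
    · subst hj; rw [Function.update_self]
    · rw [Function.update_of_ne hj]; exact (hml j hj).symm
  have hcover : (⋃ k, E k) = H.edgeSet := by
    apply subset_antisymm
    · exact Set.iUnion_subset hEsub
    · intro e he
      induction e with
      | _ p q =>
        obtain ⟨x, ε⟩ := p
        obtain ⟨y, δ⟩ := q
        rw [SimpleGraph.mem_edgeSet] at he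
        rw [Set.mem_iUnion]
        rcases (hadj x y ε δ).mp he with ⟨⟨i, hi, hml⟩, rfl⟩ | ⟨hne', rfl⟩
        · have hy := hupdy i x y hml
          have hm := hhmem i (y i) x ε hi
          rw [← hy] at hm
          exact ⟨_, hm⟩
        · refine ⟨Fin.last S, ?_⟩
          fin_cases ε <;> fin_cases δ
          · exact absurd rfl hne'
          · exact hvmem x
          · rw [Sym2.eq_swap]; exact hvmem x
          · exact absurd rfl hne'
  have hmatch : ∀ (k : Fin (S+1)) (e e' : Sym2 X), e ∈ E k → e' ∈ E k → e ≠ e' →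
      ∀ z : X, z ∈ e → z ∉ e' := by
    intro k e e' he he' hne z hz hz'
    obtain ⟨zx, zε⟩ := z
    by_cases hl : k = Fin.last S
    · rw [hE] at he he'
      simp only [if_pos hl, Set.mem_setOf_eq] at he he'
      obtain ⟨x, rfl⟩ := he
      obtain ⟨x', rfl⟩ := he'
      rw [Sym2.mem_iff] at hz hz'
      have hx : zx = x := by
        rcases hz with h | h <;> exact (Prod.ext_iff.mp h).1
      have hx' : zx = x' := by
        rcases hz' with h | h <;> exact (Prod.ext_iff.mp h).1
      rw [hx] at hx'
      rw [hx'] at hne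
      exact hne rfl
    · obtain ⟨i, c, hk⟩ : ∃ i c, (eK ⟨i, c⟩).castSucc = k := by
        refine ⟨(eK.symm (k.castPred hl)).1, (eK.symm (k.castPred hl)).2, ?_⟩
        rw [Sigma.eta, Equiv.apply_symm_apply, Fin.castSucc_castPred]
      obtain ⟨b, hb, hc, rfl⟩ := hanchor i c e zx zε (hk ▸ he) hz
      obtain ⟨b', hb', hc', he''⟩ := hanchor i c e' zx zε (hk ▸ he') hz'
      have hbb : b = b' := h3 i (zx i) b b' hb hb' (add_right_cancel (hc.trans hc'.symm))
      rw [he'', hbb] at hne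
      exact hne rfl
  have hpos : ∀ k : Fin (S+1), IsPositiveMatching
      (H.deleteEdges (⋃ j : Fin (S+1), ⋃ (_ : j < k), E j)) (E k) := by
    intro k
    refine ⟨?_, fun e he e' he' hne z => hmatch k e e' he he' hne z, ?_⟩
    · intro e he
      rw [SimpleGraph.edgeSet_deleteEdges]
      refine ⟨hEsub k he, ?_⟩
      intro hmem
      simp only [Set.mem_iUnion] at hmem
      obtain ⟨j, hjk, hej⟩ := hmem
      exact (ne_of_lt hjk) (hdisj k j e he hej).symm
    · by_cases hl : k = Fin.last S
      · refine ⟨fun _ => 1, ?_⟩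
        rintro ⟨x, ε⟩ ⟨y, δ⟩ hadj'
        rw [SimpleGraph.deleteEdges_adj] at hadj'
        obtain ⟨hHadj, hnotdel⟩ := hadj'
        have hone : (0:ℝ) < 1 + 1 := by norm_num
        rcases (hadj x y ε δ).mp hHadj with ⟨⟨i, hi, hml⟩, rfl⟩ | ⟨hne', rfl⟩
        · exfalso
          apply hnotdel
          have hy := hupdy i x y hml
          have hm := hhmem i (y i) x ε hi
          rw [← hy] at hm
          simp only [Set.mem_iUnion]
          exact ⟨_, hl ▸ Fin.castSucc_lt_last _, hm⟩
        · refine iff_of_true hone ?_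
          subst hl
          fin_cases ε <;> fin_cases δ
          · exact absurd rfl hne'
          · exact hvmem x
          · rw [Sym2.eq_swap]; exact hvmem x
          · exact absurd rfl hne'
      · obtain ⟨i, c, hk⟩ : ∃ i c, (eK ⟨i, c⟩).castSucc = k := by
          refine ⟨(eK.symm (k.castPred hl)).1, (eK.symm (k.castPred hl)).2, ?_⟩
          rw [Sigma.eta, Equiv.apply_symm_apply, Fin.castSucc_castPred]
        subst hk
        refine ⟨fun z => f i c (z.1 i) (shift i z.1 z.2), ?_⟩
        rintro ⟨x, ε⟩ ⟨y, δ⟩ hadj'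
        rw [SimpleGraph.deleteEdges_adj] at hadj'
        have hHadj := hadj'.1
        show 0 < f i c (x i) (shift i x ε) + f i c (y i) (shift i y δ) ↔ _
        rcases (hadj x y ε δ).mp hHadj with ⟨⟨i₀, hi₀, hml⟩, rfl⟩ | ⟨hne', rfl⟩
        · have hy := hupdy i₀ x y hml
          by_cases hii : i₀ = i
          · subst hii
            have hs : shift i₀ y ε = shift i₀ x ε := by
              rw [hy, hshift_eq]
            rw [hs]
            rw [h4 i₀ c (x i₀) (y i₀) (shift i₀ x ε) hi₀]
            constructor
            · intro hec
              have hm := hhmem i₀ (y i₀) x ε hi₀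
              rw [← hy, hec] at hm
              exact hm
            · intro hmem
              obtain ⟨b₂, hb₂, hc₂, he₂⟩ := hanchor i₀ c _ x ε hmem (Sym2.mem_mk_left _ _)
              rw [Sym2.eq_iff] at he₂
              rcases he₂ with ⟨-, he₂⟩ | ⟨he₂, -⟩
              · rw [Prod.mk.injEq] at he₂
                have hyb : y i₀ = b₂ := by
                  have := congrFun he₂.1 i₀
                  rwa [Function.update_self] at this
                rw [hyb]
                exact hc₂
              · exfalso
                rw [Prod.mk.injEq] at he₂
                have := congrFun he₂.1 i₀
                rw [Function.update_self] at this
                exact hb₂.ne this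
          · have hrw : x i = y i := hml i fun h => hii h.symm
            have hs := hshift_adj i i₀ x (y i₀) ε (fun h => hii h) hi₀
            rw [← hy] at hs
            refine iff_of_false ?_ ?_
            · intro hpos
              rw [← hrw] at hpos
              rcases hs with hs | hs
              · have h5' := h5 i c (x i) (shift i x ε)
                rw [← hs] at h5'
                linarith
              · have h5' := h5 i c (x i) (shift i y ε)
                rw [← hs] at h5'
                linarith
            · intro hmem
              obtain ⟨b₂, hb₂, -, he₂⟩ := hanchor i c _ x ε hmem (Sym2.mem_mk_left _ _)
              rw [Sym2.eq_iff] at he₂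
              rcases he₂ with ⟨-, he₂⟩ | ⟨he₂, -⟩
              · rw [Prod.mk.injEq] at he₂
                have := congrFun he₂.1 i₀
                rw [Function.update_of_ne (fun h => hii h)] at this
                exact hi₀.ne' this
              · rw [Prod.mk.injEq] at he₂
                have := congrFun he₂.1 i
                rw [Function.update_self] at this
                exact hb₂.ne this
        · refine iff_of_false ?_ ?_
          · fin_cases ε <;> fin_cases δ
            · exact absurd rfl hne'
            · intro hpos
              simp only [Fin.zero_eta, Fin.mk_one] at hpos
              have h5' := h5 i c (x i) (shift i x 0)
              rw [← hshift_vert i x] at h5'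
              linarith
            · intro hpos
              simp only [Fin.zero_eta, Fin.mk_one] at hpos
              have h5' := h5 i c (x i) (shift i x 0)
              rw [← hshift_vert i x] at h5'
              linarith
            · exact absurd rfl hne'
          · intro hmem
            obtain ⟨b₂, hb₂, -, he₂⟩ := hanchor i c _ x ε hmem (Sym2.mem_mk_left _ _)
            rw [Sym2.eq_iff] at he₂
            rcases he₂ with ⟨-, he₂⟩ | ⟨he₂, -⟩
            · rw [Prod.mk.injEq] at he₂
              exact hne' he₂.2.symm
            · rw [Prod.mk.injEq] at he₂
              exact hupd_ne i x b₂ hb₂ he₂.1.symm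
  have hPMD : IsPMD H E := by
    refine ⟨?_, hcover, hpos⟩
    intro k k' hkk'
    rw [Set.disjoint_left]
    intro e he he'
    exact hkk' (hdisj k k' e he he')
  -- lower bound
  have hlb : ∀ p : ℕ, (∃ E' : Fin p → Set (Sym2 X), IsPMD H E') → S + 1 ≤ p := by
    rintro p ⟨E', hE'⟩
    have hvm : ∀ i, ∃ v : W i, (T i).degree v = (T i).maxDegree := by
      intro i
      haveI := hW i
      obtain ⟨v, hv⟩ := (T i).exists_maximal_degree_vertex
      exact ⟨v, hv.symm⟩
    choose vm hvmax using hvm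
    set x₀ : ∀ j, W j := fun j => vm j with hx₀
    set a₀ : X := (x₀, 0) with ha₀
    set F : ((i : Fin n) × {b : W i // b ∈ (T i).neighborFinset (vm i)}) ⊕ Unit → Sym2 X :=
      fun t =>
      Sum.elim (fun sg : (i : Fin n) × {b : W i // b ∈ (T i).neighborFinset (vm i)} =>
        s(a₀, ((Function.update x₀ sg.1 sg.2.1, 0) : X)))
        (fun _ => s(a₀, ((x₀, 1) : X))) t with hF
    have hFadj : ∀ i (b : W i), b ∈ (T i).neighborFinset (vm i) → (T i).Adj (x₀ i) b :=
      fun i b hb => (T i).mem_neighborFinset (vm i) b |>.mp hb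
    have hFedge : ∀ t, F t ∈ H.edgeSet := by
      intro t
      rcases t with ⟨i, b⟩ | u
      · exact (H.mem_edgeSet).mpr (hhadj i b.1 x₀ 0 (hFadj i b.1 b.2))
      · exact (H.mem_edgeSet).mpr (hvadj x₀)
    have hFinj : Function.Injective F := by
      intro t t' ht
      rcases t with ⟨i, b⟩ | u <;> rcases t' with ⟨i', b'⟩ | u'
      · rw [hF] at ht
        simp only [Sum.elim_inl] at ht
        rw [Sym2.eq_iff] at ht
        rcases ht with ⟨-, ht⟩ | ⟨ht, -⟩
        · rw [Prod.mk.injEq] at ht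
          by_cases hii : i = i'
          · subst hii
            have hbb : b.1 = b'.1 := by
              have := congrFun ht.1 i
              rwa [Function.update_self, Function.update_self] at this
            exact congrArg Sum.inl (Sigma.ext rfl (heq_of_eq (Subtype.ext hbb)))
          · exfalso
            have := congrFun ht.1 i
            rw [Function.update_self, Function.update_of_ne hii] at this
            exact (hFadj i b.1 b.2).ne this.symm
        · exfalso
          rw [ha₀, Prod.mk.injEq] at ht
          have := congrFun ht.1 i'
          rw [Function.update_self] at this
          exact (hFadj i' b'.1 b'.2).ne this
      · exfalso
        rw [hF] at ht
        simp only [Sum.elim_inl, Sum.elim_inr] at ht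
        rw [Sym2.eq_iff] at ht
        rcases ht with ⟨-, ht⟩ | ⟨ht, -⟩ <;> rw [Prod.mk.injEq] at ht
        · exact absurd ht.2 (by decide)
        · exact absurd ht.2 (by decide)
      · exfalso
        rw [hF] at ht
        simp only [Sum.elim_inl, Sum.elim_inr] at ht
        rw [Sym2.eq_iff] at ht
        rcases ht with ⟨-, ht⟩ | ⟨-, ht⟩ <;> rw [Prod.mk.injEq] at ht
        · exact absurd ht.2 (by decide)
        · exact absurd ht.2 (by decide)
      · cases u; cases u'; rfl
    have hin : ∀ t, ∃ k : Fin p, F t ∈ E' k := by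
      intro t
      have hmem : F t ∈ (⋃ k, E' k) := by
        rw [hE'.2.1]
        exact hFedge t
      rwa [Set.mem_iUnion] at hmem
    choose idx hidx using hin
    have hinj : Function.Injective idx := by
      intro t t' ht
      apply hFinj
      by_contra hne
      have hd := (hE'.2.2 (idx t)).2.1 (F t) (hidx t) (F t') (by rw [ht]; exact hidx t') hne
      exact hd a₀ (by
        rcases t with ⟨i, b⟩ | u <;> simp only [hF, Sum.elim_inl, Sum.elim_inr] <;>
          exact Sym2.mem_mk_left _ _) (by
        rcases t' with ⟨i', b'⟩ | u' <;> simp only [hF, Sum.elim_inl, Sum.elim_inr] <;>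
          exact Sym2.mem_mk_left _ _)
    have hcard := Fintype.card_le_of_injective idx hinj
    rw [Fintype.card_fin] at hcard
    have hcardNT : Fintype.card
        (((i : Fin n) × {b : W i // b ∈ (T i).neighborFinset (vm i)}) ⊕ Unit) = S + 1 := by
      rw [Fintype.card_sum, Fintype.card_sigma]
      have hcc : ∀ i : Fin n, Fintype.card {b : W i // b ∈ (T i).neighborFinset (vm i)} = D i := by
        intro i
        rw [Fintype.card_coe, (T i).card_neighborFinset_eq_degree, hvmax i]
      simp only [hcc]
      rw [hS]
      simp
    rw [hcardNT] at hcard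
    exact hcard
  have hmem : (S + 1) ∈ {p : ℕ | ∃ E0 : Fin p → Set (Sym2 X), IsPMD H E0} := ⟨E, hPMD⟩
  have hfin : pmd H = S + 1 :=
    le_antisymm (Nat.sInf_le hmem) (le_csInf ⟨S+1, hmem⟩ hlb)
  rw [hfin]
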